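/- Suppose S is a safe zone (S ⊆ I for every I with Sol I), U is an unsafe zone (U ∩ I = ∅ for every I with Sol I), and the hypothesis without unsafe zones S ∪ L is a solution interpretation (Sol (S ∪ L) holds). Then the full Chronosymbolic hypothesis S ∪ (L \ U) is also a solution interpretation, i.e., Sol (S ∪ (L \ U)) holds. (This is the claim Ĩ_slu ⪰ Ĩ_sl of Lemma 1.) -/
import Mathlib

theorem stmt2 {α : Type*} (Sol : Set α → Prop) (S U L : Set α)
    (hS : ∀ I : Set α, Sol I → S ⊆ I)
    (hU : ∀ I : Set α, Sol I → U ∩ I = ∅)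
    (hSL : Sol (S ∪ L)) :
    Sol (S ∪ (L \ U)) := by
  have h := hU _ hSL
  have : S ∪ (L \ U) = S ∪ L := by
    ext x
    simp only [Set.mem_union, Set.mem_diff]
    constructor
    · rintro (hx | ⟨hx, _⟩) <;> [exact Or.inl hx; exact Or.inr hx]
    · rintro (hx | hx)
      · exact Or.inl hx
      · refine Or.inr ⟨hx, fun hxu => ?_⟩
        exact Set.eq_empty_iff_forall_notMem.mp h x ⟨hxu, Or.inr hx⟩
  rwa [this]
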